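/- Let q : ℝ → ℝ be twice continuously differentiable with q''(s) = 2 q(s)³ + s q(s) for all s, and with the Hastings–McLeod normalization lim_{s→+∞} 2√π · s^{1/4} · e^{(2/3) s^{3/2}} · q(s) = 1. Then as s → +∞, ∫_s^∞ q(t) dt = ( e^{−(2/3) s^{3/2}} / (2√π s^{3/4}) ) · ( 1 − (41/48) s^{−3/2} + (9241/4608) s^{−3} + O(s^{−9/2}) ); that is, there exist constants C > 0 and s₀ such that for all s ≥ s₀ the difference between ∫_s^∞ q(t) dt and the three displayed terms is at most C · e^{−(2/3) s^{3/2}} · s^{−3/4} · s^{−9/2}. -/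

import Mathlib

open MeasureTheory Filter Real

open Set Topology

noncomputable section

/-- `ξ(s) = (2/3) s^{3/2}` -/
def HMxi (s : ℝ) : ℝ := 2 / 3 * s ^ ((3:ℝ)/2)

/-- `ψ_a(s) = e^{-ξ(s)} s^a` -/
def HMpsi (a s : ℝ) : ℝ := Real.exp (-HMxi s) * s ^ a

/-- `ψ₂_a(s) = e^{-2ξ(s)} s^a` -/
def HMpsi2 (a s : ℝ) : ℝ := Real.exp (-(2 * HMxi s)) * s ^ a

/-- `χ_a(s) = e^{ξ(s)} s^a` -/
def HMchi (a s : ℝ) : ℝ := Real.exp (HMxi s) * s ^ a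

/-- `c = 1/(2√π)` -/
def HMc : ℝ := 1 / (2 * Real.sqrt π)

lemma HMc_pos : 0 < HMc := by
  have h : 0 < Real.sqrt π := Real.sqrt_pos.2 Real.pi_pos
  rw [HMc]; positivity

lemma HMc_le_half : HMc ≤ 1 / 2 := by
  have h1 : (1:ℝ) ≤ Real.sqrt π := by
    rw [show (1:ℝ) = Real.sqrt 1 by simp]
    exact Real.sqrt_le_sqrt (by linarith [Real.pi_gt_three])
  rw [HMc, div_le_div_iff₀ (by linarith) (by norm_num)]
  linarith

lemma HMpsi_pos {a s : ℝ} (hs : 0 < s) : 0 < HMpsi a s := by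
  have := Real.rpow_pos_of_pos hs a
  unfold HMpsi; positivity

lemma HMpsi2_pos {a s : ℝ} (hs : 0 < s) : 0 < HMpsi2 a s := by
  have := Real.rpow_pos_of_pos hs a
  unfold HMpsi2; positivity

lemma HMchi_pos {a s : ℝ} (hs : 0 < s) : 0 < HMchi a s := by
  have := Real.rpow_pos_of_pos hs a
  unfold HMchi; positivity

lemma HMpsi_mul_rpow {a b s : ℝ} (hs : 0 < s) : HMpsi a s * s ^ b = HMpsi (a + b) s := by
  rw [HMpsi, HMpsi, Real.rpow_add hs, mul_assoc]

lemma HMmul_psi {a s : ℝ} (hs : 0 < s) : s * HMpsi a s = HMpsi (a + 1) s := by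
  rw [← HMpsi_mul_rpow hs, Real.rpow_one]; ring

lemma HMmul_chi {a s : ℝ} (hs : 0 < s) : s * HMchi a s = HMchi (a + 1) s := by
  rw [HMchi, HMchi, Real.rpow_add hs, Real.rpow_one]; ring

lemma HMchi_mul_psi {a b s : ℝ} (hs : 0 < s) : HMchi a s * HMpsi b s = s ^ (a + b) := by
  rw [HMchi, HMpsi, Real.rpow_add hs,
    show Real.exp (HMxi s) * s ^ a * (Real.exp (-HMxi s) * s ^ b)
      = (Real.exp (HMxi s) * Real.exp (-HMxi s)) * (s ^ a * s ^ b) by ring,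
    ← Real.exp_add]
  simp

lemma HMchi_mul_psi2 {a b s : ℝ} (hs : 0 < s) : HMchi a s * HMpsi2 b s = HMpsi (a + b) s := by
  rw [HMchi, HMpsi2, HMpsi, Real.rpow_add hs,
    show Real.exp (HMxi s) * s ^ a * (Real.exp (-(2 * HMxi s)) * s ^ b)
      = (Real.exp (HMxi s) * Real.exp (-(2 * HMxi s))) * (s ^ a * s ^ b) by ring,
    ← Real.exp_add]
  ring_nf

lemma HMpsi_split {a b s : ℝ} (hs : 0 < s) : HMpsi a s = s ^ (a - b) * HMpsi b s := by
  rw [HMpsi, HMpsi, show a = (a - b) + b by ring, Real.rpow_add hs]; ring_nf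

lemma HMpsi2_split {a b s : ℝ} (hs : 0 < s) : HMpsi2 a s = s ^ (a - b) * HMpsi2 b s := by
  rw [HMpsi2, HMpsi2]
  nth_rewrite 1 [show a = (a - b) + b by ring]
  rw [Real.rpow_add hs]; ring

lemma hasDerivAt_HMxi {s : ℝ} (hs : 0 < s) : HasDerivAt HMxi (s ^ ((1:ℝ)/2)) s := by
  have h := (Real.hasDerivAt_rpow_const (p := (3:ℝ)/2) (Or.inl hs.ne')).const_mul (2/3 : ℝ)
  refine h.congr_deriv ?_
  rw [show (3:ℝ)/2 - 1 = 1/2 by norm_num]; ring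

lemma hasDerivAt_HMpsi (a : ℝ) {s : ℝ} (hs : 0 < s) :
    HasDerivAt (HMpsi a) (a * HMpsi (a - 1) s - HMpsi (a + 1/2) s) s := by
  have hx : HasDerivAt (fun s => Real.exp (-HMxi s)) (-(s ^ ((1:ℝ)/2)) * Real.exp (-HMxi s)) s := by
    have := ((hasDerivAt_HMxi hs).neg).exp
    refine this.congr_deriv ?_; simp only [Pi.neg_apply]; ring
  have hp : HasDerivAt (fun s : ℝ => s ^ a) (a * s ^ (a - 1)) s :=
    Real.hasDerivAt_rpow_const (Or.inl hs.ne')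
  have := hx.mul hp
  refine this.congr_deriv (Eq.symm ?_)
  have e1 : HMpsi (a - 1) s = Real.exp (-HMxi s) * s ^ (a - 1) := rfl
  have e2 : HMpsi (a + 1/2) s = Real.exp (-HMxi s) * (s ^ a * s ^ ((1:ℝ)/2)) := by
    rw [HMpsi, Real.rpow_add hs]
  rw [e1, e2]
  ring

-- new material

lemma hasDerivAt_HMchi (a : ℝ) {s : ℝ} (hs : 0 < s) :
    HasDerivAt (HMchi a) (a * HMchi (a - 1) s + HMchi (a + 1/2) s) s := by
  have hx : HasDerivAt (fun s => Real.exp (HMxi s)) (s ^ ((1:ℝ)/2) * Real.exp (HMxi s)) s := by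
    have := (hasDerivAt_HMxi hs).exp
    refine this.congr_deriv ?_; ring
  have hp : HasDerivAt (fun s : ℝ => s ^ a) (a * s ^ (a - 1)) s :=
    Real.hasDerivAt_rpow_const (Or.inl hs.ne')
  have := hx.mul hp
  refine this.congr_deriv (Eq.symm ?_)
  have e1 : HMchi (a - 1) s = Real.exp (HMxi s) * s ^ (a - 1) := rfl
  have e2 : HMchi (a + 1/2) s = Real.exp (HMxi s) * (s ^ a * s ^ ((1:ℝ)/2)) := by
    rw [HMchi, Real.rpow_add hs]
  rw [e1, e2]; ring

lemma hasDerivAt_Em {s : ℝ} (hs : 0 < s) :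
    HasDerivAt (fun u => Real.exp (-HMxi u)) (-HMpsi (1/2) s) s := by
  have := ((hasDerivAt_HMxi hs).neg).exp
  refine this.congr_deriv (Eq.symm ?_)
  rw [HMpsi]; simp only [Pi.neg_apply]; ring

lemma hasDerivAt_E2 {s : ℝ} (hs : 0 < s) :
    HasDerivAt (fun u => Real.exp (-(2 * HMxi u))) (-(2 * HMpsi2 (1/2) s)) s := by
  have := (((hasDerivAt_HMxi hs).const_mul (2:ℝ)).neg).exp
  refine this.congr_deriv (Eq.symm ?_)
  rw [HMpsi2]; simp only [Pi.neg_apply]; ring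

lemma continuousAt_HMxi {s : ℝ} (hs : 0 < s) : ContinuousAt HMxi s :=
  ((Real.continuousAt_rpow_const s _ (Or.inl hs.ne')).const_smul (2/3 : ℝ) : )

lemma continuousAt_HMpsi (a : ℝ) {s : ℝ} (hs : 0 < s) : ContinuousAt (HMpsi a) s :=
  ((continuousAt_HMxi hs).neg.rexp.mul (Real.continuousAt_rpow_const s _ (Or.inl hs.ne')))

lemma continuousAt_HMpsi2 (a : ℝ) {s : ℝ} (hs : 0 < s) : ContinuousAt (HMpsi2 a) s :=
  (((continuousAt_HMxi hs).const_smul (2:ℝ)).neg.rexp.mul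
    (Real.continuousAt_rpow_const s _ (Or.inl hs.ne')) : )

lemma continuousAt_HMchi (a : ℝ) {s : ℝ} (hs : 0 < s) : ContinuousAt (HMchi a) s :=
  ((continuousAt_HMxi hs).rexp.mul (Real.continuousAt_rpow_const s _ (Or.inl hs.ne')))

lemma tendsto_HMxi : Tendsto HMxi atTop atTop := by
  have := tendsto_rpow_atTop (show (0:ℝ) < 3/2 by norm_num)
  exact Tendsto.const_mul_atTop (by norm_num) this

lemma tendsto_Em : Tendsto (fun s => Real.exp (-HMxi s)) atTop (𝓝 0) :=
  Real.tendsto_exp_atBot.comp (tendsto_neg_atBot_iff.mpr tendsto_HMxi)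

lemma tendsto_E2 : Tendsto (fun s => Real.exp (-(2 * HMxi s))) atTop (𝓝 0) :=
  Real.tendsto_exp_atBot.comp
    (tendsto_neg_atBot_iff.mpr (Tendsto.const_mul_atTop (by norm_num) tendsto_HMxi))

lemma tendsto_HMpsi {a : ℝ} (ha : a ≤ 0) : Tendsto (HMpsi a) atTop (𝓝 0) := by
  apply tendsto_of_tendsto_of_tendsto_of_le_of_le' tendsto_const_nhds tendsto_Em
  · filter_upwards [eventually_ge_atTop (1:ℝ)] with s hs
    exact (HMpsi_pos (by linarith)).le
  · filter_upwards [eventually_ge_atTop (1:ℝ)] with s hs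
    rw [HMpsi]
    nth_rewrite 2 [show Real.exp (-HMxi s) = Real.exp (-HMxi s) * 1 by ring]
    exact mul_le_mul_of_nonneg_left (Real.rpow_le_one_of_one_le_of_nonpos hs ha) (Real.exp_pos _).le

lemma rpow_antitone {c u v : ℝ} (hc : c ≤ 0) (hu : 0 < u) (huv : u ≤ v) : v ^ c ≤ u ^ c :=
  antitoneOn_rpow_Ioi_of_exponent_nonpos hc (mem_Ioi.2 hu) (mem_Ioi.2 (lt_of_lt_of_le hu huv)) huv

lemma integrableOn_psi_half {S : ℝ} (hS : 0 < S) :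
    IntegrableOn (HMpsi (1/2)) (Ioi S) volume := by
  have := integrableOn_Ioi_deriv_of_nonneg' (g := fun u => -Real.exp (-HMxi u))
    (g' := HMpsi (1/2)) (a := S) (l := 0)
    (fun x hx => (hasDerivAt_Em (lt_of_lt_of_le hS hx)).neg.congr_deriv (neg_neg _))
    (fun x hx => (HMpsi_pos (hS.trans hx)).le)
    (by simpa using tendsto_Em.neg)
  exact this

lemma integral_psi_half {S : ℝ} (hS : 0 < S) :
    ∫ x in Ioi S, HMpsi (1/2) x = Real.exp (-HMxi S) := by
  have := integral_Ioi_of_hasDerivAt_of_tendsto' (f := fun u => -Real.exp (-HMxi u))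
    (f' := HMpsi (1/2)) (a := S) (m := 0)
    (fun x hx => (hasDerivAt_Em (lt_of_lt_of_le hS hx)).neg.congr_deriv (neg_neg _))
    (integrableOn_psi_half hS) (by simpa using tendsto_Em.neg)
  rw [this]; ring

lemma integrableOn_psi2_half {S : ℝ} (hS : 0 < S) :
    IntegrableOn (HMpsi2 (1/2)) (Ioi S) volume := by
  have := integrableOn_Ioi_deriv_of_nonneg' (g := fun u => -Real.exp (-(2 * HMxi u)) / 2)
    (g' := HMpsi2 (1/2)) (a := S) (l := 0)
    (fun x hx => by
      have := ((hasDerivAt_E2 (lt_of_lt_of_le hS hx)).neg).div_const (2:ℝ)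
      exact this.congr_deriv (by ring))
    (fun x hx => (HMpsi2_pos (hS.trans hx)).le)
    (by simpa using (tendsto_E2.neg.div_const (2:ℝ)))
  exact this

lemma integral_psi2_half {S : ℝ} (hS : 0 < S) :
    ∫ x in Ioi S, HMpsi2 (1/2) x = Real.exp (-(2 * HMxi S)) / 2 := by
  have := integral_Ioi_of_hasDerivAt_of_tendsto' (f := fun u => -Real.exp (-(2 * HMxi u)) / 2)
    (f' := HMpsi2 (1/2)) (a := S) (m := 0)
    (fun x hx => by
      have := ((hasDerivAt_E2 (lt_of_lt_of_le hS hx)).neg).div_const (2:ℝ)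
      exact this.congr_deriv (by ring))
    (integrableOn_psi2_half hS) (by simpa using (tendsto_E2.neg.div_const (2:ℝ)))
  rw [this]; ring

lemma HMpsi_le_psi_half {b u S : ℝ} (hb : b ≤ 1/2) (hS : 0 < S) (hu : S ≤ u) :
    HMpsi b u ≤ S ^ (b - 1/2) * HMpsi (1/2) u := by
  rw [HMpsi_split (b := 1/2) (lt_of_lt_of_le hS hu)]
  exact mul_le_mul_of_nonneg_right (rpow_antitone (by linarith) hS hu)
    (HMpsi_pos (lt_of_lt_of_le hS hu)).le

lemma HMpsi2_le_psi2_half {b u S : ℝ} (hb : b ≤ 1/2) (hS : 0 < S) (hu : S ≤ u) :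
    HMpsi2 b u ≤ S ^ (b - 1/2) * HMpsi2 (1/2) u := by
  rw [HMpsi2_split (b := 1/2) (lt_of_lt_of_le hS hu)]
  exact mul_le_mul_of_nonneg_right (rpow_antitone (by linarith) hS hu)
    (HMpsi2_pos (lt_of_lt_of_le hS hu)).le

lemma integrableOn_HMpsi {b S : ℝ} (hb : b ≤ 1/2) (hS : 0 < S) :
    IntegrableOn (HMpsi b) (Ioi S) volume := by
  refine Integrable.mono' ((integrableOn_psi_half hS).const_mul (S ^ (b - 1/2))) ?_ ?_
  · exact ((continuousOn_of_forall_continuousAt (fun x hx => continuousAt_HMpsi b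
      (hS.trans (mem_Ioi.1 hx)))).aestronglyMeasurable measurableSet_Ioi)
  · filter_upwards [ae_restrict_mem measurableSet_Ioi] with u hu
    rw [Real.norm_eq_abs, abs_of_nonneg (HMpsi_pos (hS.trans (mem_Ioi.1 hu))).le]
    exact HMpsi_le_psi_half hb hS (le_of_lt (mem_Ioi.1 hu))

lemma integrableOn_HMpsi2 {b S : ℝ} (hb : b ≤ 1/2) (hS : 0 < S) :
    IntegrableOn (HMpsi2 b) (Ioi S) volume := by
  refine Integrable.mono' ((integrableOn_psi2_half hS).const_mul (S ^ (b - 1/2))) ?_ ?_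
  · exact ((continuousOn_of_forall_continuousAt (fun x hx => continuousAt_HMpsi2 b
      (hS.trans (mem_Ioi.1 hx)))).aestronglyMeasurable measurableSet_Ioi)
  · filter_upwards [ae_restrict_mem measurableSet_Ioi] with u hu
    rw [Real.norm_eq_abs, abs_of_nonneg (HMpsi2_pos (hS.trans (mem_Ioi.1 hu))).le]
    exact HMpsi2_le_psi2_half hb hS (le_of_lt (mem_Ioi.1 hu))

lemma integral_HMpsi_le {b S : ℝ} (hb : b ≤ 1/2) (hS : 0 < S) :
    ∫ x in Ioi S, HMpsi b x ≤ S ^ (b - 1/2) * Real.exp (-HMxi S) := by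
  calc ∫ x in Ioi S, HMpsi b x
      ≤ ∫ x in Ioi S, S ^ (b - 1/2) * HMpsi (1/2) x := by
        refine setIntegral_mono_on (integrableOn_HMpsi hb hS)
          ((integrableOn_psi_half hS).const_mul _) measurableSet_Ioi ?_
        exact fun u hu => HMpsi_le_psi_half hb hS (le_of_lt (mem_Ioi.1 hu))
    _ = S ^ (b - 1/2) * Real.exp (-HMxi S) := by
        rw [integral_const_mul, integral_psi_half hS]

lemma integral_HMpsi2_le {b S : ℝ} (hb : b ≤ 1/2) (hS : 0 < S) :
    ∫ x in Ioi S, HMpsi2 b x ≤ S ^ (b - 1/2) * (Real.exp (-(2 * HMxi S)) / 2) := by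
  calc ∫ x in Ioi S, HMpsi2 b x
      ≤ ∫ x in Ioi S, S ^ (b - 1/2) * HMpsi2 (1/2) x := by
        refine setIntegral_mono_on (integrableOn_HMpsi2 hb hS)
          ((integrableOn_psi2_half hS).const_mul _) measurableSet_Ioi ?_
        exact fun u hu => HMpsi2_le_psi2_half hb hS (le_of_lt (mem_Ioi.1 hu))
    _ = _ := by rw [integral_const_mul, integral_psi2_half hS]

lemma E2_le_rpow {s : ℝ} (hs : 8 ≤ s) : Real.exp (-(2 * HMxi s)) ≤ s ^ (-(3:ℝ)) := by
  have hs0 : (0:ℝ) < s := by linarith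
  set t := s ^ ((3:ℝ)/2) with ht_def
  have ht : (0:ℝ) < t := Real.rpow_pos_of_pos hs0 _
  have ht16 : (16:ℝ) ≤ t := by
    have e8 : (8:ℝ) = (2:ℝ) ^ (3:ℝ) := by
      rw [show (2:ℝ) ^ (3:ℝ) = (2:ℝ) ^ (3:ℕ) from Real.rpow_natCast 2 3]; norm_num
    have h6 : (8:ℝ) ^ ((3:ℝ)/2) ≤ t := Real.rpow_le_rpow (by norm_num) hs (by norm_num)
    have h7 : (8:ℝ) ^ ((3:ℝ)/2) = (2:ℝ) ^ ((9:ℝ)/2) := by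
      rw [e8, ← Real.rpow_mul (by norm_num)]; norm_num
    have h8 : (2:ℝ) ^ ((4:ℝ)) ≤ (2:ℝ) ^ ((9:ℝ)/2) :=
      Real.rpow_le_rpow_of_exponent_le (by norm_num) (by norm_num)
    have h9 : (2:ℝ) ^ ((4:ℝ)) = 16 := by
      rw [show (2:ℝ) ^ (4:ℝ) = (2:ℝ) ^ (4:ℕ) from Real.rpow_natCast 2 4]; norm_num
    linarith
  have hst : s ^ (3:ℝ) = t ^ (2:ℕ) := by
    rw [ht_def, ← Real.rpow_natCast (s ^ ((3:ℝ)/2)) 2, ← Real.rpow_mul hs0.le]; norm_num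
  have hexp : ((4:ℝ)/9 * t) ^ (3:ℕ) ≤ Real.exp (2 * HMxi s) := by
    have h3 : (4:ℝ)/9 * t ≤ Real.exp ((4:ℝ)/9 * t) := by
      linarith [Real.add_one_le_exp ((4:ℝ)/9 * t)]
    calc ((4:ℝ)/9 * t) ^ (3:ℕ) ≤ (Real.exp ((4:ℝ)/9 * t)) ^ (3:ℕ) :=
          pow_le_pow_left₀ (by positivity) h3 3
      _ = Real.exp ((3:ℕ) * ((4:ℝ)/9 * t)) := (Real.exp_nat_mul _ 3).symm
      _ = Real.exp (2 * HMxi s) := by rw [HMxi]; congr 1; push_cast; ring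
  have hmain : s ^ (3:ℝ) ≤ Real.exp (2 * HMxi s) := by
    have expand : ((4:ℝ)/9 * t) ^ (3:ℕ) = 64/729 * t ^ (3:ℕ) := by ring
    nlinarith [mul_pos ht ht, sq_nonneg t]
  rw [Real.rpow_neg hs0.le, show -(2 * HMxi s) = -(2 * HMxi s) by ring, Real.exp_neg]
  exact inv_anti₀ (Real.rpow_pos_of_pos hs0 _) hmain
-- appended to prelude
lemma hasDerivAt_HMpsi' (a b c : ℝ) {s : ℝ} (hb : b = a - 1) (hc : c = a + 1/2) (hs : 0 < s) :
    HasDerivAt (HMpsi a) (a * HMpsi b s - HMpsi c s) s := by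
  subst hb hc; exact hasDerivAt_HMpsi a hs

lemma HMmul_psi' {a b s : ℝ} (hb : b = a + 1) (hs : 0 < s) : s * HMpsi a s = HMpsi b s := by
  subst hb; exact HMmul_psi hs

/-- the model `m` -/
def HMm (s : ℝ) : ℝ :=
  HMc * (HMpsi (-(1:ℝ)/4) s - 5/48 * HMpsi (-(7:ℝ)/4) s + 385/4608 * HMpsi (-(13:ℝ)/4) s)

/-- `m'` -/
def HMm1 (s : ℝ) : ℝ :=
  HMc * ((-(1:ℝ)/4 * HMpsi (-(5:ℝ)/4) s - HMpsi ((1:ℝ)/4) s)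
    - 5/48 * (-(7:ℝ)/4 * HMpsi (-(11:ℝ)/4) s - HMpsi (-(5:ℝ)/4) s)
    + 385/4608 * (-(13:ℝ)/4 * HMpsi (-(17:ℝ)/4) s - HMpsi (-(11:ℝ)/4) s))

/-- the residual `r = m'' - s m` -/
def HMr (s : ℝ) : ℝ := 85085/73728 * HMc * HMpsi (-(21:ℝ)/4) s

lemma hasDerivAt_HMm {s : ℝ} (hs : 0 < s) : HasDerivAt HMm (HMm1 s) s := by
  have d1 := hasDerivAt_HMpsi' (-(1:ℝ)/4) (-(5:ℝ)/4) ((1:ℝ)/4) (by norm_num) (by norm_num) hs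
  have d2 := hasDerivAt_HMpsi' (-(7:ℝ)/4) (-(11:ℝ)/4) (-(5:ℝ)/4) (by norm_num) (by norm_num) hs
  have d3 := hasDerivAt_HMpsi' (-(13:ℝ)/4) (-(17:ℝ)/4) (-(11:ℝ)/4) (by norm_num) (by norm_num) hs
  exact ((d1.sub (d2.const_mul (5/48))).add (d3.const_mul (385/4608))).const_mul HMc

lemma hasDerivAt_HMm1 {s : ℝ} (hs : 0 < s) : HasDerivAt HMm1 (s * HMm s + HMr s) s := by
  have d1 := hasDerivAt_HMpsi' (-(5:ℝ)/4) (-(9:ℝ)/4) (-(3:ℝ)/4) (by norm_num) (by norm_num) hs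
  have d2 := hasDerivAt_HMpsi' ((1:ℝ)/4) (-(3:ℝ)/4) ((3:ℝ)/4) (by norm_num) (by norm_num) hs
  have d3 := hasDerivAt_HMpsi' (-(11:ℝ)/4) (-(15:ℝ)/4) (-(9:ℝ)/4) (by norm_num) (by norm_num) hs
  have d4 := hasDerivAt_HMpsi' (-(17:ℝ)/4) (-(21:ℝ)/4) (-(15:ℝ)/4) (by norm_num) (by norm_num) hs
  have dm1 : HasDerivAt HMm1
      (HMc * ((-(1:ℝ)/4 * (-(5:ℝ)/4 * HMpsi (-(9:ℝ)/4) s - HMpsi (-(3:ℝ)/4) s)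
          - ((1:ℝ)/4 * HMpsi (-(3:ℝ)/4) s - HMpsi ((3:ℝ)/4) s))
        - 5/48 * (-(7:ℝ)/4 * (-(11:ℝ)/4 * HMpsi (-(15:ℝ)/4) s - HMpsi (-(9:ℝ)/4) s)
          - (-(5:ℝ)/4 * HMpsi (-(9:ℝ)/4) s - HMpsi (-(3:ℝ)/4) s))
        + 385/4608 * (-(13:ℝ)/4 * (-(17:ℝ)/4 * HMpsi (-(21:ℝ)/4) s - HMpsi (-(15:ℝ)/4) s)
          - (-(11:ℝ)/4 * HMpsi (-(15:ℝ)/4) s - HMpsi (-(9:ℝ)/4) s))) ) s := by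
    exact ((((d1.const_mul (-(1:ℝ)/4)).sub d2).sub
      (((d3.const_mul (-(7:ℝ)/4)).sub d1).const_mul (5/48))).add
      (((d4.const_mul (-(13:ℝ)/4)).sub d3).const_mul (385/4608))).const_mul HMc
  convert dm1 using 1
  have e1 : s * HMpsi (-(1:ℝ)/4) s = HMpsi ((3:ℝ)/4) s := HMmul_psi' (by norm_num) hs
  have e2 : s * HMpsi (-(7:ℝ)/4) s = HMpsi (-(3:ℝ)/4) s := HMmul_psi' (by norm_num) hs
  have e3 : s * HMpsi (-(13:ℝ)/4) s = HMpsi (-(9:ℝ)/4) s := HMmul_psi' (by norm_num) hs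
  rw [HMm, HMr]
  linear_combination HMc * (e1 - 5/48 * e2 + 385/4608 * e3)

/-- antiderivative `A` with `-A' = m + ρ₂ ψ(-19/4)` -/
def HMA (s : ℝ) : ℝ :=
  HMc * (HMpsi (-(3:ℝ)/4) s - 41/48 * HMpsi (-(9:ℝ)/4) s + 9241/4608 * HMpsi (-(15:ℝ)/4) s)

lemma hasDerivAt_HMA {s : ℝ} (hs : 0 < s) :
    HasDerivAt HMA (-(HMm s) - 46205/6144 * HMc * HMpsi (-(19:ℝ)/4) s) s := by
  have d1 := hasDerivAt_HMpsi' (-(3:ℝ)/4) (-(7:ℝ)/4) (-(1:ℝ)/4) (by norm_num) (by norm_num) hs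
  have d2 := hasDerivAt_HMpsi' (-(9:ℝ)/4) (-(13:ℝ)/4) (-(7:ℝ)/4) (by norm_num) (by norm_num) hs
  have d3 := hasDerivAt_HMpsi' (-(15:ℝ)/4) (-(19:ℝ)/4) (-(13:ℝ)/4) (by norm_num) (by norm_num) hs
  have dA := ((d1.sub (d2.const_mul (41/48))).add (d3.const_mul (9241/4608))).const_mul HMc
  refine dA.congr_deriv (Eq.symm ?_)
  rw [HMm]
  ring
-- appended
lemma HMpsi_index_eq {a b : ℝ} (s : ℝ) (h : a = b) : HMpsi a s = HMpsi b s := by rw [h]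

lemma HMpsi_mono_index {a b s : ℝ} (hab : a ≤ b) (hs : 1 ≤ s) : HMpsi a s ≤ HMpsi b s := by
  rw [HMpsi, HMpsi]
  exact mul_le_mul_of_nonneg_left (Real.rpow_le_rpow_of_exponent_le hs hab) (Real.exp_pos _).le

lemma HMchi_mul_psi' {a b c s : ℝ} (h : c = a + b) (hs : 0 < s) :
    HMchi a s * HMpsi b s = s ^ c := by subst h; exact HMchi_mul_psi hs

lemma HMchi_mul_psi2' {a b c s : ℝ} (h : c = a + b) (hs : 0 < s) :
    HMchi a s * HMpsi2 b s = HMpsi c s := by subst h; exact HMchi_mul_psi2 hs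

lemma HMchi_mul_psi_cube {s : ℝ} (hs : 0 < s) :
    HMchi (-(1:ℝ)/4) s * (HMpsi (-(1:ℝ)/4) s) ^ 3 = HMpsi2 (-1:ℝ) s := by
  rw [HMchi, HMpsi, HMpsi2, mul_pow, ← Real.exp_nat_mul,
    ← Real.rpow_natCast (s ^ (-(1:ℝ)/4)) 3, ← Real.rpow_mul hs.le]
  rw [show Real.exp (HMxi s) * s ^ (-(1:ℝ)/4)
        * (Real.exp ((3:ℕ) * -HMxi s) * s ^ ((-(1:ℝ)/4) * (3:ℕ)))
      = (Real.exp (HMxi s) * Real.exp ((3:ℕ) * -HMxi s))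
        * (s ^ (-(1:ℝ)/4) * s ^ ((-(1:ℝ)/4) * (3:ℕ))) by push_cast; ring,
    ← Real.exp_add, ← Real.rpow_add hs]
  congr 1
  · congr 1; push_cast; ring
  · congr 1; push_cast; ring

lemma HMr_abs_le {s : ℝ} (hs : 0 < s) : |HMr s| ≤ HMpsi (-(21:ℝ)/4) s := by
  have hψ : 0 < HMpsi (-(21:ℝ)/4) s := HMpsi_pos hs
  have hc := HMc_pos
  have hc2 := HMc_le_half
  have hpos : 0 ≤ HMr s := by rw [HMr]; positivity
  rw [abs_of_nonneg hpos, HMr]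
  nlinarith

/-- One bootstrap pass. -/
lemma HMpass (q h W1 W : ℝ → ℝ) (S K α : ℝ) (hS : 8 ≤ S)
    (hα0 : 0 ≤ α) (hα3 : α ≤ 3) (hK : 0 ≤ K)
    (hW1 : ∀ u, W1 u = HMchi (-(1:ℝ)/4) u * (2 * q u ^ 3 - HMr u)
      - 5/16 * HMchi (-(9:ℝ)/4) u * h u)
    (hW1cont : ∀ u, 0 < u → ContinuousAt W1 u)
    (hWcont : ∀ u, 0 < u → ContinuousAt W u)
    (hWrep : ∀ t ≥ S, W t = -∫ u in Ioi t, W1 u)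
    (hGrep : ∀ s ≥ S, h s = -(HMchi (-(1:ℝ)/4) s * ∫ u in Ioi s, W u * HMpsi2 (1/2) u))
    (hqb : ∀ t ≥ S, |q t| ≤ HMpsi (-(1:ℝ)/4) t)
    (hhK : ∀ t ≥ S, |h t| ≤ K * HMpsi (-(1:ℝ)/4 - α) t) :
    ∀ s ≥ S, |h s| ≤ (1 + 5/48 * K) * HMpsi (-(1:ℝ)/4 - α - 3/2) s := by
  have hS0 : (0:ℝ) < S := by linarith
  -- pointwise bound for W1
  have hW1b : ∀ u, S ≤ u → |W1 u| ≤ 2 * HMpsi2 (-1:ℝ) u + u ^ (-(11:ℝ)/2)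
      + 5/16 * K * u ^ (-(5:ℝ)/2 - α) := by
    intro u huS
    have hu0 : (0:ℝ) < u := by linarith
    have h1 : |W1 u| ≤ HMchi (-(1:ℝ)/4) u * (2 * |q u| ^ 3 + |HMr u|)
        + 5/16 * HMchi (-(9:ℝ)/4) u * |h u| := by
      rw [hW1 u]
      refine le_trans (abs_sub _ _) ?_
      have hc1 : (0:ℝ) ≤ HMchi (-(1:ℝ)/4) u := (HMchi_pos hu0).le
      have hc2 : (0:ℝ) ≤ HMchi (-(9:ℝ)/4) u := (HMchi_pos hu0).le
      have t1 : |HMchi (-(1:ℝ)/4) u * (2 * q u ^ 3 - HMr u)|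
          ≤ HMchi (-(1:ℝ)/4) u * (2 * |q u| ^ 3 + |HMr u|) := by
        rw [abs_mul, abs_of_nonneg hc1]
        refine mul_le_mul_of_nonneg_left ?_ hc1
        refine le_trans (abs_sub _ _) ?_
        rw [abs_mul, abs_pow]
        norm_num
      have t2 : |5/16 * HMchi (-(9:ℝ)/4) u * h u| = 5/16 * HMchi (-(9:ℝ)/4) u * |h u| := by
        rw [abs_mul, abs_mul, abs_of_nonneg hc2, abs_of_nonneg (by norm_num : (0:ℝ) ≤ 5/16)]
      rw [t2]
      linarith
    refine le_trans h1 ?_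
    have e1 : HMchi (-(1:ℝ)/4) u * (HMpsi (-(1:ℝ)/4) u) ^ 3 = HMpsi2 (-1:ℝ) u :=
      HMchi_mul_psi_cube hu0
    have e2 : HMchi (-(1:ℝ)/4) u * HMpsi (-(21:ℝ)/4) u = u ^ (-(11:ℝ)/2) :=
      HMchi_mul_psi' (by norm_num) hu0
    have e3 : HMchi (-(9:ℝ)/4) u * HMpsi (-(1:ℝ)/4 - α) u = u ^ (-(5:ℝ)/2 - α) :=
      HMchi_mul_psi' (by ring) hu0
    have b1 : |q u| ^ 3 ≤ (HMpsi (-(1:ℝ)/4) u) ^ 3 :=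
      pow_le_pow_left₀ (abs_nonneg _) (hqb u huS) 3
    have b2 : |HMr u| ≤ HMpsi (-(21:ℝ)/4) u := HMr_abs_le hu0
    have b3 : |h u| ≤ K * HMpsi (-(1:ℝ)/4 - α) u := hhK u huS
    have hc1 : (0:ℝ) ≤ HMchi (-(1:ℝ)/4) u := (HMchi_pos hu0).le
    have hc2 : (0:ℝ) ≤ HMchi (-(9:ℝ)/4) u := (HMchi_pos hu0).le
    calc HMchi (-(1:ℝ)/4) u * (2 * |q u| ^ 3 + |HMr u|) + 5/16 * HMchi (-(9:ℝ)/4) u * |h u|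
        ≤ HMchi (-(1:ℝ)/4) u * (2 * (HMpsi (-(1:ℝ)/4) u) ^ 3 + HMpsi (-(21:ℝ)/4) u)
          + 5/16 * HMchi (-(9:ℝ)/4) u * (K * HMpsi (-(1:ℝ)/4 - α) u) := by
          gcongr
      _ = 2 * HMpsi2 (-1:ℝ) u + u ^ (-(11:ℝ)/2) + 5/16 * K * u ^ (-(5:ℝ)/2 - α) := by
          rw [mul_add, ← e1, ← e2, ← e3]; ring
  -- integrability of the dominating combo and of W1
  have hcomboInt : ∀ t, S ≤ t → IntegrableOn (fun u => 2 * HMpsi2 (-1:ℝ) u + u ^ (-(11:ℝ)/2)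
      + 5/16 * K * u ^ (-(5:ℝ)/2 - α)) (Ioi t) volume := by
    intro t htS
    have ht0 : (0:ℝ) < t := by linarith
    exact (((integrableOn_HMpsi2 (by norm_num) ht0).const_mul 2).add
      (integrableOn_Ioi_rpow_of_lt (by norm_num) ht0)).add
      ((integrableOn_Ioi_rpow_of_lt (by linarith) ht0).const_mul (5/16 * K))
  have hW1int : ∀ t, S ≤ t → IntegrableOn W1 (Ioi t) volume := by
    intro t htS
    have ht0 : (0:ℝ) < t := by linarith
    refine Integrable.mono' (hcomboInt t htS) ?_ ?_
    · exact (continuousOn_of_forall_continuousAt (fun x hx =>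
        hW1cont x (ht0.trans (mem_Ioi.1 hx)))).aestronglyMeasurable measurableSet_Ioi
    · filter_upwards [ae_restrict_mem measurableSet_Ioi] with u hu
      rw [Real.norm_eq_abs]
      exact hW1b u (htS.trans (mem_Ioi.1 hu).le)
  -- bound for |W t|
  have hWb : ∀ t, S ≤ t → |W t| ≤ t ^ (-(3:ℝ)/2) * Real.exp (-(2 * HMxi t))
      + (2/9) * t ^ (-(9:ℝ)/2) + (5/24) * K * t ^ (-(3:ℝ)/2 - α) := by
    intro t htS
    have ht0 : (0:ℝ) < t := by linarith
    rw [hWrep t htS, abs_neg, ← Real.norm_eq_abs]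
    refine le_trans (norm_integral_le_integral_norm _) ?_
    have step1 : ∫ u in Ioi t, ‖W1 u‖ ≤ ∫ u in Ioi t, (2 * HMpsi2 (-1:ℝ) u + u ^ (-(11:ℝ)/2)
        + 5/16 * K * u ^ (-(5:ℝ)/2 - α)) := by
      refine setIntegral_mono_on ((hW1int t htS).norm) (hcomboInt t htS) measurableSet_Ioi ?_
      intro u hu
      rw [Real.norm_eq_abs]
      exact hW1b u (htS.trans (mem_Ioi.1 hu).le)
    refine le_trans step1 ?_
    have i1 : ∫ u in Ioi t, HMpsi2 (-1:ℝ) u ≤ t ^ ((-1:ℝ) - 1/2) * (Real.exp (-(2 * HMxi t)) / 2) :=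
      integral_HMpsi2_le (by norm_num) ht0
    have i2 : ∫ u in Ioi t, u ^ (-(11:ℝ)/2) = (2/9) * t ^ (-(9:ℝ)/2) := by
      have := integral_Ioi_rpow_of_lt (show (-(11:ℝ)/2) < -1 by norm_num) ht0
      rw [show (-(11:ℝ)/2 + 1) = -(9:ℝ)/2 by norm_num] at this
      rw [this]; ring
    have i3 : ∫ u in Ioi t, u ^ (-(5:ℝ)/2 - α) ≤ (2/3) * t ^ (-(3:ℝ)/2 - α) := by
      have := integral_Ioi_rpow_of_lt (show (-(5:ℝ)/2 - α) < -1 by linarith) ht0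
      rw [show (-(5:ℝ)/2 - α + 1) = -(3:ℝ)/2 - α by ring] at this
      rw [this]
      have hp : (0:ℝ) ≤ t ^ (-(3:ℝ)/2 - α) := (Real.rpow_pos_of_pos ht0 _).le
      rw [show (-(3:ℝ)/2 - α) = -((3:ℝ)/2 + α) by ring] at hp ⊢
      rw [neg_div_neg_eq, div_le_iff₀ (by linarith : (0:ℝ) < (3:ℝ)/2 + α)]
      nlinarith
    have hf1 : IntegrableOn (fun u : ℝ => 2 * HMpsi2 (-1:ℝ) u) (Ioi t) volume :=
      (integrableOn_HMpsi2 (by norm_num) ht0).const_mul 2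
    have hf2 : IntegrableOn (fun u : ℝ => u ^ (-(11:ℝ)/2)) (Ioi t) volume :=
      integrableOn_Ioi_rpow_of_lt (by norm_num) ht0
    have hf3 : IntegrableOn (fun u : ℝ => 5/16 * K * u ^ (-(5:ℝ)/2 - α)) (Ioi t) volume :=
      (integrableOn_Ioi_rpow_of_lt (by linarith) ht0).const_mul (5/16 * K)
    have hf12 : IntegrableOn (fun u : ℝ => 2 * HMpsi2 (-1:ℝ) u + u ^ (-(11:ℝ)/2)) (Ioi t) volume :=
      hf1.add hf2
    have isplit : ∫ u in Ioi t, (2 * HMpsi2 (-1:ℝ) u + u ^ (-(11:ℝ)/2)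
        + 5/16 * K * u ^ (-(5:ℝ)/2 - α))
        = 2 * (∫ u in Ioi t, HMpsi2 (-1:ℝ) u) + (∫ u in Ioi t, u ^ (-(11:ℝ)/2))
          + 5/16 * K * (∫ u in Ioi t, u ^ (-(5:ℝ)/2 - α)) := by
      rw [integral_add hf12 hf3, integral_add hf1 hf2,
        integral_const_mul, integral_const_mul]
    rw [isplit]
    have e1 : t ^ ((-1:ℝ) - 1/2) = t ^ (-(3:ℝ)/2) := by norm_num
    rw [e1] at i1
    have hK2 : (0:ℝ) ≤ 5/16 * K := by linarith
    nlinarith [mul_le_mul_of_nonneg_left i3 hK2]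
  -- final step of the pass
  intro s hsS
  have hs0 : (0:ℝ) < s := by linarith
  have hs1 : (1:ℝ) ≤ s := by linarith
  have hs8 : (8:ℝ) ≤ s := by linarith
  have hxi_nonneg : ∀ u : ℝ, 0 ≤ u → 0 ≤ HMxi u := by
    intro u hu
    rw [HMxi]
    positivity
  have hE2le1 : ∀ u : ℝ, 0 ≤ u → Real.exp (-(2 * HMxi u)) ≤ 1 := by
    intro u hu
    rw [Real.exp_le_one_iff]
    nlinarith [hxi_nonneg u hu]
  -- integrability of W·ψ₂(1/2)
  have hWψint : IntegrableOn (fun u => W u * HMpsi2 (1/2) u) (Ioi s) volume := by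
    refine Integrable.mono' (g := fun u => (1 + 2/9 + 5/24 * K) * HMpsi2 (1/2) u)
      ((integrableOn_psi2_half hs0).const_mul _) ?_ ?_
    · refine (continuousOn_of_forall_continuousAt (fun x hx => ?_)).aestronglyMeasurable
        measurableSet_Ioi
      exact (hWcont x (hs0.trans (mem_Ioi.1 hx))).mul (continuousAt_HMpsi2 _ (hs0.trans (mem_Ioi.1 hx)))
    · filter_upwards [ae_restrict_mem measurableSet_Ioi] with u hu
      have huS : S ≤ u := le_trans hsS (mem_Ioi.1 hu).le
      have hu0 : (0:ℝ) < u := lt_trans hs0 (mem_Ioi.1 hu)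
      have hu1 : (1:ℝ) ≤ u := by linarith
      rw [Real.norm_eq_abs, abs_mul, abs_of_nonneg (HMpsi2_pos hu0).le]
      refine mul_le_mul_of_nonneg_right ?_ (HMpsi2_pos hu0).le
      refine le_trans (hWb u huS) ?_
      have p1 : u ^ (-(3:ℝ)/2) ≤ 1 := Real.rpow_le_one_of_one_le_of_nonpos hu1 (by norm_num)
      have p2 : u ^ (-(9:ℝ)/2) ≤ 1 := Real.rpow_le_one_of_one_le_of_nonpos hu1 (by norm_num)
      have p3 : u ^ (-(3:ℝ)/2 - α) ≤ 1 := Real.rpow_le_one_of_one_le_of_nonpos hu1 (by linarith)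
      have p4 := hE2le1 u hu0.le
      have p5 : (0:ℝ) ≤ u ^ (-(3:ℝ)/2) := (Real.rpow_pos_of_pos hu0 _).le
      have p6 : (0:ℝ) < Real.exp (-(2 * HMxi u)) := Real.exp_pos _
      nlinarith
  -- pointwise bound on the integrand, with s-dependent constants
  have hptw : ∀ u ∈ Ioi s, |W u * HMpsi2 (1/2) u|
      ≤ (11/9 * s ^ (-(9:ℝ)/2) + 5/24 * K * s ^ (-(3:ℝ)/2 - α)) * HMpsi2 (1/2) u := by
    intro u hu
    have huS : S ≤ u := le_trans hsS (mem_Ioi.1 hu).le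
    have hu0 : (0:ℝ) < u := lt_trans hs0 (mem_Ioi.1 hu)
    have hsu : s ≤ u := (mem_Ioi.1 hu).le
    rw [abs_mul, abs_of_nonneg (HMpsi2_pos hu0).le]
    refine mul_le_mul_of_nonneg_right ?_ (HMpsi2_pos hu0).le
    refine le_trans (hWb u huS) ?_
    have q1 : Real.exp (-(2 * HMxi u)) ≤ u ^ (-(3:ℝ)) := E2_le_rpow (by linarith)
    have q2 : u ^ (-(3:ℝ)/2) * u ^ (-(3:ℝ)) = u ^ (-(9:ℝ)/2) := by
      rw [← Real.rpow_add hu0]; norm_num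
    have q3 : u ^ (-(9:ℝ)/2) ≤ s ^ (-(9:ℝ)/2) := rpow_antitone (by norm_num) hs0 hsu
    have q4 : u ^ (-(3:ℝ)/2 - α) ≤ s ^ (-(3:ℝ)/2 - α) := rpow_antitone (by linarith) hs0 hsu
    have q5 : (0:ℝ) < u ^ (-(3:ℝ)/2) := Real.rpow_pos_of_pos hu0 _
    have q6 : u ^ (-(3:ℝ)/2) * Real.exp (-(2 * HMxi u)) ≤ u ^ (-(9:ℝ)/2) := by
      rw [← q2]
      exact mul_le_mul_of_nonneg_left q1 q5.le
    nlinarith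
  -- integrate the pointwise bound
  have hGb : |∫ u in Ioi s, W u * HMpsi2 (1/2) u|
      ≤ (11/9 * s ^ (-(9:ℝ)/2) + 5/24 * K * s ^ (-(3:ℝ)/2 - α)) * (Real.exp (-(2 * HMxi s)) / 2) := by
    rw [← Real.norm_eq_abs]
    refine le_trans (norm_integral_le_integral_norm _) ?_
    have step : ∫ u in Ioi s, ‖W u * HMpsi2 (1/2) u‖
        ≤ ∫ u in Ioi s, (11/9 * s ^ (-(9:ℝ)/2) + 5/24 * K * s ^ (-(3:ℝ)/2 - α)) * HMpsi2 (1/2) u := by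
      refine setIntegral_mono_on (hWψint.norm) ((integrableOn_psi2_half hs0).const_mul _)
        measurableSet_Ioi ?_
      intro u hu
      rw [Real.norm_eq_abs]
      exact hptw u hu
    refine le_trans step ?_
    rw [integral_const_mul, integral_psi2_half hs0]
  -- conclude
  rw [hGrep s hsS, abs_neg, abs_mul, abs_of_nonneg (HMchi_pos hs0).le]
  have e0 : HMpsi2 (0:ℝ) s = Real.exp (-(2 * HMxi s)) := by
    rw [HMpsi2, Real.rpow_zero, mul_one]
  have e1 : HMchi (-(1:ℝ)/4) s * Real.exp (-(2 * HMxi s)) = HMpsi (-(1:ℝ)/4) s := by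
    rw [← e0]; exact HMchi_mul_psi2' (by norm_num) hs0
  have e2 : HMpsi (-(1:ℝ)/4) s * s ^ (-(9:ℝ)/2) = HMpsi (-(19:ℝ)/4) s := by
    rw [HMpsi_mul_rpow hs0]; exact HMpsi_index_eq s (by norm_num)
  have e3 : HMpsi (-(1:ℝ)/4) s * s ^ (-(3:ℝ)/2 - α) = HMpsi (-(1:ℝ)/4 - α - 3/2) s := by
    rw [HMpsi_mul_rpow hs0]; exact HMpsi_index_eq s (by ring)
  have e4 : HMpsi (-(19:ℝ)/4) s ≤ HMpsi (-(1:ℝ)/4 - α - 3/2) s :=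
    HMpsi_mono_index (by linarith) hs1
  have hchi := (HMchi_pos (a := -(1:ℝ)/4) hs0).le
  calc HMchi (-(1:ℝ)/4) s * |∫ u in Ioi s, W u * HMpsi2 (1/2) u|
      ≤ HMchi (-(1:ℝ)/4) s * ((11/9 * s ^ (-(9:ℝ)/2) + 5/24 * K * s ^ (-(3:ℝ)/2 - α))
          * (Real.exp (-(2 * HMxi s)) / 2)) :=
        mul_le_mul_of_nonneg_left hGb hchi
    _ = 11/18 * (HMpsi (-(1:ℝ)/4) s * s ^ (-(9:ℝ)/2))
        + 5/48 * K * (HMpsi (-(1:ℝ)/4) s * s ^ (-(3:ℝ)/2 - α)) := by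
        rw [← e1]; ring
    _ = 11/18 * HMpsi (-(19:ℝ)/4) s + 5/48 * K * HMpsi (-(1:ℝ)/4 - α - 3/2) s := by
        rw [e2, e3]
    _ ≤ (1 + 5/48 * K) * HMpsi (-(1:ℝ)/4 - α - 3/2) s := by
        have := HMpsi_pos (a := -(1:ℝ)/4 - α - 3/2) hs0
        nlinarith
-- appended: HMkey
lemma hasDerivAt_HMchi' (a b c : ℝ) {s : ℝ} (hb : b = a - 1) (hc : c = a + 1/2) (hs : 0 < s) :
    HasDerivAt (HMchi a) (a * HMchi b s + HMchi c s) s := by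
  subst hb hc; exact hasDerivAt_HMchi a hs

lemma HMmul_chi' {a b s : ℝ} (hb : b = a + 1) (hs : 0 < s) : s * HMchi a s = HMchi b s := by
  subst hb; exact HMmul_chi hs

lemma HMpsi_mul_psi' {a b c s : ℝ} (h : c = a + b) (hs : 0 < s) :
    HMpsi a s * HMpsi b s = HMpsi2 c s := by
  subst h
  rw [HMpsi, HMpsi, HMpsi2, Real.rpow_add hs,
    show Real.exp (-HMxi s) * s ^ a * (Real.exp (-HMxi s) * s ^ b)
      = (Real.exp (-HMxi s) * Real.exp (-HMxi s)) * (s ^ a * s ^ b) by ring, ← Real.exp_add]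
  ring_nf

set_option maxHeartbeats 2000000 in
lemma HMkey (q q' : ℝ → ℝ)
    (hq : ∀ s, HasDerivAt q (q' s) s)
    (hq' : ∀ s, HasDerivAt q' (2 * q s ^ 3 + s * q s) s)
    (hnorm : Tendsto (fun s : ℝ =>
        2 * Real.sqrt π * s ^ ((1 : ℝ) / 4) * Real.exp (2 / 3 * s ^ ((3 : ℝ) / 2)) * q s)
      atTop (nhds 1)) :
    ∃ S : ℝ, 8 ≤ S ∧ ∀ s ≥ S, |q s - HMm s| ≤ 4 * HMpsi (-(19:ℝ)/4) s := by
  classical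
  set h : ℝ → ℝ := fun s => q s - HMm s with hh_def
  set h1 : ℝ → ℝ := fun s => q' s - HMm1 s with hh1_def
  set W : ℝ → ℝ := fun s => HMchi (-(1:ℝ)/4) s * h1 s
    - (HMchi ((1:ℝ)/4) s - 1/4 * HMchi (-(5:ℝ)/4) s) * h s with hW_def
  set W1 : ℝ → ℝ := fun u => HMchi (-(1:ℝ)/4) u * (2 * q u ^ 3 - HMr u)
    - 5/16 * HMchi (-(9:ℝ)/4) u * h u with hW1_def
  set G : ℝ → ℝ := fun s => HMpsi ((1:ℝ)/4) s * h s with hG_def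
  -- derivatives
  have hd_h : ∀ s : ℝ, 0 < s → HasDerivAt h (h1 s) s := fun s hs =>
    (hq s).sub (hasDerivAt_HMm hs)
  have hd_h1 : ∀ s : ℝ, 0 < s →
      HasDerivAt h1 (s * h s + (2 * q s ^ 3 - HMr s)) s := by
    intro s hs
    have := (hq' s).sub (hasDerivAt_HMm1 hs)
    refine this.congr_deriv (Eq.symm ?_)
    simp only [hh_def]
    ring
  have hd_W : ∀ s : ℝ, 0 < s → HasDerivAt W (W1 s) s := by
    intro s hs
    have d1 := hasDerivAt_HMchi' (-(1:ℝ)/4) (-(5:ℝ)/4) ((1:ℝ)/4) (by norm_num) (by norm_num) hs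
    have d2 := hasDerivAt_HMchi' ((1:ℝ)/4) (-(3:ℝ)/4) ((3:ℝ)/4) (by norm_num) (by norm_num) hs
    have d3 := hasDerivAt_HMchi' (-(5:ℝ)/4) (-(9:ℝ)/4) (-(3:ℝ)/4) (by norm_num) (by norm_num) hs
    have dW := (d1.mul (hd_h1 s hs)).sub ((d2.sub (d3.const_mul (1/4))).mul (hd_h s hs))
    refine dW.congr_deriv (Eq.symm ?_)
    have echi : s * HMchi (-(1:ℝ)/4) s = HMchi ((3:ℝ)/4) s := HMmul_chi' (by norm_num) hs
    simp only [hW1_def, Pi.sub_apply]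
    linear_combination -(h s) * echi
  have hd_G : ∀ s : ℝ, 0 < s → HasDerivAt G (W s * HMpsi2 (1/2) s) s := by
    intro s hs
    have d1 := hasDerivAt_HMpsi' ((1:ℝ)/4) (-(3:ℝ)/4) ((3:ℝ)/4) (by norm_num) (by norm_num) hs
    have dG := d1.mul (hd_h s hs)
    refine dG.congr_deriv (Eq.symm ?_)
    have eA : HMchi (-(1:ℝ)/4) s * HMpsi2 (1/2) s = HMpsi ((1:ℝ)/4) s :=
      HMchi_mul_psi2' (by norm_num) hs
    have eB : HMchi ((1:ℝ)/4) s * HMpsi2 (1/2) s = HMpsi ((3:ℝ)/4) s :=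
      HMchi_mul_psi2' (by norm_num) hs
    have eC : HMchi (-(5:ℝ)/4) s * HMpsi2 (1/2) s = HMpsi (-(3:ℝ)/4) s :=
      HMchi_mul_psi2' (by norm_num) hs
    simp only [hW_def]
    linear_combination (h1 s) * eA - (h s) * eB + 1/4 * (h s) * eC
  -- continuity
  have hhcont : ∀ u : ℝ, 0 < u → ContinuousAt h u := fun u hu => (hd_h u hu).continuousAt
  have hW1cont : ∀ u : ℝ, 0 < u → ContinuousAt W1 u := by
    intro u hu
    have c1 : ContinuousAt (fun v => HMchi (-(1:ℝ)/4) v) u := continuousAt_HMchi _ hu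
    have c2 : ContinuousAt q u := (hq u).continuousAt
    have c3 : ContinuousAt HMr u := by
      have : ContinuousAt (fun v => 85085/73728 * HMc * HMpsi (-(21:ℝ)/4) v) u :=
        continuousAt_const.mul (continuousAt_HMpsi _ hu)
      exact this
    have c4 : ContinuousAt (fun v => HMchi (-(9:ℝ)/4) v) u := continuousAt_HMchi _ hu
    exact ((c1.mul ((continuousAt_const.mul ((c2.pow 3))).sub c3)).sub
      ((continuousAt_const.mul c4).mul (hhcont u hu)))
  have hWcont : ∀ u : ℝ, 0 < u → ContinuousAt W u := by
    intro u hu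
    have c1 : ContinuousAt h1 u := (hd_h1 u hu).continuousAt
    exact (((continuousAt_HMchi _ hu).mul c1).sub
      (((continuousAt_HMchi _ hu).sub (continuousAt_const.mul (continuousAt_HMchi _ hu))).mul
        (hhcont u hu)))
  -- normalization limits
  have hsqrt : (0:ℝ) < Real.sqrt π := Real.sqrt_pos.2 Real.pi_pos
  have hC : HMc * (2 * Real.sqrt π) = 1 := by
    rw [HMc]; field_simp
  have ht1 : Tendsto (fun s => HMchi ((1:ℝ)/4) s * q s) atTop (𝓝 HMc) := by
    have h0 := hnorm.const_mul HMc
    rw [mul_one] at h0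
    refine h0.congr (fun s => ?_)
    simp only [HMchi, HMxi]
    linear_combination (s ^ ((1:ℝ)/4) * Real.exp (2/3 * s ^ ((3:ℝ)/2)) * q s) * hC
  have htm : Tendsto (fun s => HMchi ((1:ℝ)/4) s * HMm s) atTop (𝓝 HMc) := by
    have t1 : Tendsto (fun s : ℝ => s ^ (-(3:ℝ)/2)) atTop (𝓝 0) := by
      have := tendsto_rpow_neg_atTop (show (0:ℝ) < 3/2 by norm_num)
      refine this.congr (fun s => ?_); norm_num
    have t2 : Tendsto (fun s : ℝ => s ^ (-(3:ℝ))) atTop (𝓝 0) := by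
      have := tendsto_rpow_neg_atTop (show (0:ℝ) < 3 by norm_num)
      exact this
    have base : Tendsto (fun s : ℝ =>
        HMc * (1 - 5/48 * s ^ (-(3:ℝ)/2) + 385/4608 * s ^ (-(3:ℝ)))) atTop
        (𝓝 (HMc * (1 - 5/48 * 0 + 385/4608 * 0))) := by
      exact ((tendsto_const_nhds.sub (t1.const_mul _)).add (t2.const_mul _)).const_mul HMc
    rw [show HMc * (1 - 5/48 * 0 + 385/4608 * 0) = HMc by ring] at base
    refine base.congr' ?_
    filter_upwards [eventually_gt_atTop (0:ℝ)] with s hs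
    have e1 : HMchi ((1:ℝ)/4) s * HMpsi (-(1:ℝ)/4) s = (1:ℝ) := by
      rw [HMchi_mul_psi' (show (0:ℝ) = (1:ℝ)/4 + -(1:ℝ)/4 by norm_num) hs, Real.rpow_zero]
    have e2 : HMchi ((1:ℝ)/4) s * HMpsi (-(7:ℝ)/4) s = s ^ (-(3:ℝ)/2) :=
      HMchi_mul_psi' (by norm_num) hs
    have e3 : HMchi ((1:ℝ)/4) s * HMpsi (-(13:ℝ)/4) s = s ^ (-(3:ℝ)) :=
      HMchi_mul_psi' (by norm_num) hs
    rw [HMm]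
    linear_combination -HMc * e1 + 5/48 * HMc * e2 - 385/4608 * HMc * e3
  have hdiff : Tendsto (fun s => HMchi ((1:ℝ)/4) s * h s) atTop (𝓝 0) := by
    have := ht1.sub htm
    rw [sub_self] at this
    refine this.congr (fun s => ?_)
    simp only [hh_def]
    ring
  -- choose S
  obtain ⟨N1, hN1⟩ := (Metric.tendsto_atTop.1 ht1) (1/4) (by norm_num)
  obtain ⟨N2, hN2⟩ := (Metric.tendsto_atTop.1 hdiff) 1 (by norm_num)
  set S : ℝ := max 8 (max N1 N2) with hS_def
  have hS8 : (8:ℝ) ≤ S := le_max_left _ _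
  have hS0 : (0:ℝ) < S := by linarith
  have hqb : ∀ t ≥ S, |q t| ≤ HMpsi (-(1:ℝ)/4) t := by
    intro t ht
    have ht0 : (0:ℝ) < t := by linarith
    have hd := hN1 t (le_trans (le_trans (le_max_left _ _) (le_max_right 8 _)) ht)
    rw [Real.dist_eq, abs_lt] at hd
    have hb : |HMchi ((1:ℝ)/4) t * q t| ≤ 1 :=
      abs_le.2 ⟨by linarith [HMc_pos, HMc_le_half], by linarith [HMc_pos, HMc_le_half]⟩
    have e1 : HMpsi (-(1:ℝ)/4) t * HMchi ((1:ℝ)/4) t = (1:ℝ) := by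
      rw [mul_comm, HMchi_mul_psi' (show (0:ℝ) = (1:ℝ)/4 + -(1:ℝ)/4 by norm_num) ht0,
        Real.rpow_zero]
    calc |q t| = HMpsi (-(1:ℝ)/4) t * |HMchi ((1:ℝ)/4) t * q t| := by
          rw [abs_mul, abs_of_nonneg (HMchi_pos ht0).le, ← mul_assoc, e1, one_mul]
      _ ≤ HMpsi (-(1:ℝ)/4) t * 1 := mul_le_mul_of_nonneg_left hb (HMpsi_pos ht0).le
      _ = HMpsi (-(1:ℝ)/4) t := mul_one _
  have hhb : ∀ t ≥ S, |h t| ≤ 1 * HMpsi (-(1:ℝ)/4 - 0) t := by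
    intro t ht
    have ht0 : (0:ℝ) < t := by linarith
    have hd := hN2 t (le_trans (le_trans (le_max_right _ _) (le_max_right 8 _)) ht)
    rw [Real.dist_eq, sub_zero, abs_lt] at hd
    have hb : |HMchi ((1:ℝ)/4) t * h t| ≤ 1 := abs_le.2 ⟨by linarith, by linarith⟩
    have e1 : HMpsi (-(1:ℝ)/4) t * HMchi ((1:ℝ)/4) t = (1:ℝ) := by
      rw [mul_comm, HMchi_mul_psi' (show (0:ℝ) = (1:ℝ)/4 + -(1:ℝ)/4 by norm_num) ht0,
        Real.rpow_zero]
    have : |h t| ≤ HMpsi (-(1:ℝ)/4) t := by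
      calc |h t| = HMpsi (-(1:ℝ)/4) t * |HMchi ((1:ℝ)/4) t * h t| := by
            rw [abs_mul, abs_of_nonneg (HMchi_pos ht0).le, ← mul_assoc, e1, one_mul]
        _ ≤ HMpsi (-(1:ℝ)/4) t * 1 := mul_le_mul_of_nonneg_left hb (HMpsi_pos ht0).le
        _ = HMpsi (-(1:ℝ)/4) t := mul_one _
    rw [one_mul, HMpsi_index_eq t (show -(1:ℝ)/4 - 0 = -(1:ℝ)/4 by ring)]
    exact this
  -- integrability of W1 on tails
  have hW1int : ∀ t, S ≤ t → IntegrableOn W1 (Ioi t) volume := by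
    intro t htS
    have ht0 : (0:ℝ) < t := by linarith
    have combo : IntegrableOn (fun u : ℝ => 2 * HMpsi2 (-1:ℝ) u + u ^ (-(11:ℝ)/2)
        + 5/16 * u ^ (-(5:ℝ)/2)) (Ioi t) volume :=
      (((integrableOn_HMpsi2 (by norm_num) ht0).const_mul 2).add
        (integrableOn_Ioi_rpow_of_lt (by norm_num) ht0)).add
        ((integrableOn_Ioi_rpow_of_lt (by norm_num) ht0).const_mul (5/16))
    refine Integrable.mono' combo ?_ ?_
    · exact (continuousOn_of_forall_continuousAt (fun x hx =>
        hW1cont x (ht0.trans (mem_Ioi.1 hx)))).aestronglyMeasurable measurableSet_Ioi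
    · filter_upwards [ae_restrict_mem measurableSet_Ioi] with u hu
      have huS : S ≤ u := le_trans htS (mem_Ioi.1 hu).le
      have hu0 : (0:ℝ) < u := by linarith
      rw [Real.norm_eq_abs]
      have h1 : |W1 u| ≤ HMchi (-(1:ℝ)/4) u * (2 * |q u| ^ 3 + |HMr u|)
          + 5/16 * HMchi (-(9:ℝ)/4) u * |h u| := by
        simp only [hW1_def]
        refine le_trans (abs_sub _ _) ?_
        have hc1 : (0:ℝ) ≤ HMchi (-(1:ℝ)/4) u := (HMchi_pos hu0).le
        have hc2 : (0:ℝ) ≤ HMchi (-(9:ℝ)/4) u := (HMchi_pos hu0).le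
        have t1 : |HMchi (-(1:ℝ)/4) u * (2 * q u ^ 3 - HMr u)|
            ≤ HMchi (-(1:ℝ)/4) u * (2 * |q u| ^ 3 + |HMr u|) := by
          rw [abs_mul, abs_of_nonneg hc1]
          refine mul_le_mul_of_nonneg_left ?_ hc1
          refine le_trans (abs_sub _ _) ?_
          rw [abs_mul, abs_pow]
          norm_num
        have t2 : |5/16 * HMchi (-(9:ℝ)/4) u * h u|
            = 5/16 * HMchi (-(9:ℝ)/4) u * |h u| := by
          rw [abs_mul, abs_mul, abs_of_nonneg hc2, abs_of_nonneg (by norm_num : (0:ℝ) ≤ 5/16)]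
        rw [t2]; linarith
      refine le_trans h1 ?_
      have e1 : HMchi (-(1:ℝ)/4) u * (HMpsi (-(1:ℝ)/4) u) ^ 3 = HMpsi2 (-1:ℝ) u :=
        HMchi_mul_psi_cube hu0
      have e2 : HMchi (-(1:ℝ)/4) u * HMpsi (-(21:ℝ)/4) u = u ^ (-(11:ℝ)/2) :=
        HMchi_mul_psi' (by norm_num) hu0
      have e3 : HMchi (-(9:ℝ)/4) u * HMpsi (-(1:ℝ)/4) u = u ^ (-(5:ℝ)/2) :=
        HMchi_mul_psi' (by norm_num) hu0
      have b1 : |q u| ^ 3 ≤ (HMpsi (-(1:ℝ)/4) u) ^ 3 :=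
        pow_le_pow_left₀ (abs_nonneg _) (hqb u huS) 3
      have b2 : |HMr u| ≤ HMpsi (-(21:ℝ)/4) u := HMr_abs_le hu0
      have b3 : |h u| ≤ HMpsi (-(1:ℝ)/4) u := by
        have := hhb u huS
        rwa [one_mul, HMpsi_index_eq u (show -(1:ℝ)/4 - 0 = -(1:ℝ)/4 by ring)] at this
      have hc1 : (0:ℝ) ≤ HMchi (-(1:ℝ)/4) u := (HMchi_pos hu0).le
      have hc2 : (0:ℝ) ≤ HMchi (-(9:ℝ)/4) u := (HMchi_pos hu0).le
      calc HMchi (-(1:ℝ)/4) u * (2 * |q u| ^ 3 + |HMr u|) + 5/16 * HMchi (-(9:ℝ)/4) u * |h u|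
          ≤ HMchi (-(1:ℝ)/4) u * (2 * (HMpsi (-(1:ℝ)/4) u) ^ 3 + HMpsi (-(21:ℝ)/4) u)
            + 5/16 * HMchi (-(9:ℝ)/4) u * HMpsi (-(1:ℝ)/4) u := by gcongr
        _ = 2 * HMpsi2 (-1:ℝ) u + u ^ (-(11:ℝ)/2) + 5/16 * u ^ (-(5:ℝ)/2) := by
            rw [mul_add, ← e1, ← e2, ← e3]; ring
  -- W tends to a limit L
  have hW1intS := hW1int S le_rfl
  set L : ℝ := W S + ∫ u in Ioi S, W1 u with hL_def
  have hWkey : ∀ x ≥ S, W x = W S + ∫ u in S..x, W1 u := by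
    intro x hx
    have hint : IntervalIntegrable W1 volume S x := by
      rw [intervalIntegrable_iff_integrableOn_Ioc_of_le hx]
      exact hW1intS.mono_set Ioc_subset_Ioi_self
    have := intervalIntegral.integral_eq_sub_of_hasDerivAt (f := W) (f' := W1)
      (fun u hu => by
        rw [uIcc_of_le hx] at hu
        exact hd_W u (by linarith [hu.1])) hint
    rw [this]; ring
  have hWtend : Tendsto W atTop (𝓝 L) := by
    have tendInt : Tendsto (fun x => ∫ u in S..x, W1 u) atTop (𝓝 (∫ u in Ioi S, W1 u)) :=
      intervalIntegral_tendsto_integral_Ioi S hW1intS tendsto_id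
    have hconst : Tendsto (fun x : ℝ => W S + ∫ u in S..x, W1 u) atTop
        (𝓝 (W S + ∫ u in Ioi S, W1 u)) := tendsto_const_nhds.add tendInt
    refine hconst.congr' ?_
    filter_upwards [eventually_ge_atTop S] with x hx
    exact (hWkey x hx).symm
  have hWrep0 : ∀ t ≥ S, ∫ u in Ioi t, W1 u = L - W t := by
    intro t ht
    exact integral_Ioi_of_hasDerivAt_of_tendsto'
      (fun x hx => hd_W x (by have := mem_Ici.1 hx; linarith)) (hW1int t ht) hWtend
  -- bound on |W|
  have hBW : ∀ t ≥ S, |W t| ≤ |L| + ∫ u in Ioi S, ‖W1 u‖ := by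
    intro t ht
    have := hWrep0 t ht
    have h2 : |W t| ≤ |L| + |∫ u in Ioi t, W1 u| := by
      have : W t = L - ∫ u in Ioi t, W1 u := by linarith [this]
      rw [this]
      refine le_trans (abs_sub _ _) ?_
      simp
    refine le_trans h2 ?_
    have h3 : |∫ u in Ioi t, W1 u| ≤ ∫ u in Ioi t, ‖W1 u‖ := by
      rw [← Real.norm_eq_abs]; exact norm_integral_le_integral_norm _
    have h4 : ∫ u in Ioi t, ‖W1 u‖ ≤ ∫ u in Ioi S, ‖W1 u‖ := by
      refine setIntegral_mono_set (hW1intS.norm) ?_ ?_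
      · filter_upwards with u using norm_nonneg _
      · exact HasSubset.Subset.eventuallyLE (Ioi_subset_Ioi ht)
    linarith
  set BW : ℝ := |L| + ∫ u in Ioi S, ‖W1 u‖ with hBW_def
  -- integrability of W ψ₂(1/2)
  have hGint : ∀ t, S ≤ t → IntegrableOn (fun u => W u * HMpsi2 (1/2) u) (Ioi t) volume := by
    intro t htS
    have ht0 : (0:ℝ) < t := by linarith
    refine Integrable.mono' ((integrableOn_psi2_half ht0).const_mul BW) ?_ ?_
    · refine (continuousOn_of_forall_continuousAt (fun x hx => ?_)).aestronglyMeasurable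
        measurableSet_Ioi
      exact (hWcont x (ht0.trans (mem_Ioi.1 hx))).mul (continuousAt_HMpsi2 _ (ht0.trans (mem_Ioi.1 hx)))
    · filter_upwards [ae_restrict_mem measurableSet_Ioi] with u hu
      have huS : S ≤ u := le_trans htS (mem_Ioi.1 hu).le
      have hu0 : (0:ℝ) < u := by linarith
      rw [Real.norm_eq_abs, abs_mul, abs_of_nonneg (HMpsi2_pos hu0).le]
      exact mul_le_mul_of_nonneg_right (hBW u huS) (HMpsi2_pos hu0).le
  -- G tends to zero
  have hGtend : Tendsto G atTop (𝓝 0) := by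
    have hE2g : Tendsto (fun s => HMpsi2 (0:ℝ) s) atTop (𝓝 0) :=
      tendsto_E2.congr (fun s => by rw [HMpsi2, Real.rpow_zero, mul_one])
    refine squeeze_zero_norm' ?_ hE2g
    filter_upwards [eventually_ge_atTop S] with s hs
    have hs0 : (0:ℝ) < s := by linarith
    have hb : |h s| ≤ HMpsi (-(1:ℝ)/4) s := by
      have := hhb s hs
      rwa [one_mul, HMpsi_index_eq s (show -(1:ℝ)/4 - 0 = -(1:ℝ)/4 by ring)] at this
    have e1 : HMpsi ((1:ℝ)/4) s * HMpsi (-(1:ℝ)/4) s = HMpsi2 (0:ℝ) s :=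
      HMpsi_mul_psi' (by norm_num) hs0
    calc ‖G s‖ = HMpsi ((1:ℝ)/4) s * |h s| := by
          simp only [hG_def]
          rw [Real.norm_eq_abs, abs_mul, abs_of_nonneg (HMpsi_pos hs0).le]
      _ ≤ HMpsi ((1:ℝ)/4) s * HMpsi (-(1:ℝ)/4) s :=
          mul_le_mul_of_nonneg_left hb (HMpsi_pos hs0).le
      _ = HMpsi2 (0:ℝ) s := e1
  -- G representation
  have hGrep : ∀ s ≥ S, h s = -(HMchi (-(1:ℝ)/4) s * ∫ u in Ioi s, W u * HMpsi2 (1/2) u) := by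
    intro s hsS
    have hs0 : (0:ℝ) < s := by linarith
    have hf : ∫ u in Ioi s, W u * HMpsi2 (1/2) u = 0 - G s :=
      integral_Ioi_of_hasDerivAt_of_tendsto'
        (fun x hx => hd_G x (by have := mem_Ici.1 hx; linarith)) (hGint s hsS) hGtend
    have e1 : HMchi (-(1:ℝ)/4) s * HMpsi ((1:ℝ)/4) s = (1:ℝ) := by
      rw [HMchi_mul_psi' (show (0:ℝ) = -(1:ℝ)/4 + (1:ℝ)/4 by norm_num) hs0, Real.rpow_zero]
    have e2 : h s = HMchi (-(1:ℝ)/4) s * G s := by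
      simp only [hG_def]
      rw [← mul_assoc, e1, one_mul]
    rw [e2, hf]
    ring
  -- the limit L is zero
  have hL0 : L = 0 := by
    by_contra hL
    have hLpos : (0:ℝ) < |L| := abs_pos.2 hL
    obtain ⟨N3, hN3⟩ := (Metric.tendsto_atTop.1 hWtend) (|L|/2) (by positivity)
    obtain ⟨N4, hN4⟩ := (Metric.tendsto_atTop.1 hdiff) (|L|/8) (by positivity)
    set t0 : ℝ := max S (max N3 N4) with ht0_def
    have htS : S ≤ t0 := le_max_left _ _
    have ht00 : (0:ℝ) < t0 := by linarith
    have hint1 : IntegrableOn (fun u => W u * HMpsi2 (1/2) u) (Ioi t0) volume := hGint t0 htS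
    have hint2 : IntegrableOn (fun u => L * HMpsi2 (1/2) u) (Ioi t0) volume :=
      (integrableOn_psi2_half ht00).const_mul L
    have hsplit : ∫ u in Ioi t0, (W u * HMpsi2 (1/2) u - L * HMpsi2 (1/2) u)
        = (∫ u in Ioi t0, W u * HMpsi2 (1/2) u)
          - L * (Real.exp (-(2 * HMxi t0)) / 2) := by
      rw [integral_sub hint1 hint2, integral_const_mul, integral_psi2_half ht00]
    have habs : |∫ u in Ioi t0, (W u * HMpsi2 (1/2) u - L * HMpsi2 (1/2) u)|
        ≤ |L|/2 * (Real.exp (-(2 * HMxi t0)) / 2) := by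
      rw [← Real.norm_eq_abs]
      refine le_trans (norm_integral_le_integral_norm _) ?_
      have step : ∫ u in Ioi t0, ‖W u * HMpsi2 (1/2) u - L * HMpsi2 (1/2) u‖
          ≤ ∫ u in Ioi t0, |L|/2 * HMpsi2 (1/2) u := by
        refine setIntegral_mono_on ((hint1.sub hint2).norm)
          ((integrableOn_psi2_half ht00).const_mul _) measurableSet_Ioi ?_
        intro u hu
        have hu0 : (0:ℝ) < u := lt_trans ht00 (mem_Ioi.1 hu)
        have huN3 : N3 ≤ u :=
          le_trans (le_trans (le_max_left _ _) (le_max_right S _)) (mem_Ioi.1 hu).le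
        have hd := hN3 u huN3
        rw [Real.dist_eq] at hd
        rw [show W u * HMpsi2 (1/2) u - L * HMpsi2 (1/2) u
            = (W u - L) * HMpsi2 (1/2) u by ring,
          Real.norm_eq_abs, abs_mul, abs_of_nonneg (HMpsi2_pos hu0).le]
        exact mul_le_mul_of_nonneg_right hd.le (HMpsi2_pos hu0).le
      refine le_trans step ?_
      rw [integral_const_mul, integral_psi2_half ht00]
    have hE2pos : (0:ℝ) < Real.exp (-(2 * HMxi t0)) := Real.exp_pos _
    have hlow : |L|/4 * Real.exp (-(2 * HMxi t0))
        ≤ |∫ u in Ioi t0, W u * HMpsi2 (1/2) u| := by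
      have h6 : |L * (Real.exp (-(2 * HMxi t0)) / 2)|
          - |∫ u in Ioi t0, W u * HMpsi2 (1/2) u|
          ≤ |L * (Real.exp (-(2 * HMxi t0)) / 2)
            - ∫ u in Ioi t0, W u * HMpsi2 (1/2) u| := abs_sub_abs_le_abs_sub _ _
      have h7 : |L * (Real.exp (-(2 * HMxi t0)) / 2)
          - ∫ u in Ioi t0, W u * HMpsi2 (1/2) u|
          = |∫ u in Ioi t0, (W u * HMpsi2 (1/2) u - L * HMpsi2 (1/2) u)| := by
        rw [hsplit, abs_sub_comm]
      have h8 : |L * (Real.exp (-(2 * HMxi t0)) / 2)|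
          = |L| * (Real.exp (-(2 * HMxi t0)) / 2) := by
        rw [abs_mul, abs_of_nonneg (by positivity : (0:ℝ) ≤ Real.exp (-(2 * HMxi t0)) / 2)]
      rw [h7, h8] at h6
      linarith [habs]
    -- lower bound on |h t0|
    have e0 : HMpsi2 (0:ℝ) t0 = Real.exp (-(2 * HMxi t0)) := by
      rw [HMpsi2, Real.rpow_zero, mul_one]
    have e1 : HMchi (-(1:ℝ)/4) t0 * Real.exp (-(2 * HMxi t0)) = HMpsi (-(1:ℝ)/4) t0 := by
      rw [← e0]; exact HMchi_mul_psi2' (by norm_num) ht00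
    have hlow2 : |L|/4 * HMpsi (-(1:ℝ)/4) t0 ≤ |h t0| := by
      rw [hGrep t0 htS, abs_neg, abs_mul, abs_of_nonneg (HMchi_pos ht00).le]
      calc |L|/4 * HMpsi (-(1:ℝ)/4) t0
          = HMchi (-(1:ℝ)/4) t0 * (|L|/4 * Real.exp (-(2 * HMxi t0))) := by
            rw [← e1]; ring
        _ ≤ HMchi (-(1:ℝ)/4) t0 * |∫ u in Ioi t0, W u * HMpsi2 (1/2) u| :=
            mul_le_mul_of_nonneg_left hlow (HMchi_pos ht00).le
    -- upper bound on |h t0|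
    have hupp : |h t0| ≤ |L|/8 * HMpsi (-(1:ℝ)/4) t0 := by
      have hd := hN4 t0 (le_trans (le_trans (le_max_right _ _) (le_max_right S _)) le_rfl)
      rw [Real.dist_eq, sub_zero] at hd
      have einv : HMpsi (-(1:ℝ)/4) t0 * HMchi ((1:ℝ)/4) t0 = (1:ℝ) := by
        rw [mul_comm, HMchi_mul_psi' (show (0:ℝ) = (1:ℝ)/4 + -(1:ℝ)/4 by norm_num) ht00,
          Real.rpow_zero]
      calc |h t0| = HMpsi (-(1:ℝ)/4) t0 * |HMchi ((1:ℝ)/4) t0 * h t0| := by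
            rw [abs_mul, abs_of_nonneg (HMchi_pos ht00).le, ← mul_assoc, einv, one_mul]
        _ ≤ HMpsi (-(1:ℝ)/4) t0 * (|L|/8) :=
            mul_le_mul_of_nonneg_left hd.le (HMpsi_pos ht00).le
        _ = |L|/8 * HMpsi (-(1:ℝ)/4) t0 := by ring
    have hψpos := HMpsi_pos (a := -(1:ℝ)/4) ht00
    nlinarith
  have hWrep : ∀ t ≥ S, W t = -∫ u in Ioi t, W1 u := by
    intro t ht
    have := hWrep0 t ht
    rw [hL0] at this
    linarith
  -- bootstrap iterations
  have hW1eq : ∀ u, W1 u = HMchi (-(1:ℝ)/4) u * (2 * q u ^ 3 - HMr u)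
      - 5/16 * HMchi (-(9:ℝ)/4) u * h u := fun u => rfl
  have pass1 := HMpass q h W1 W S 1 0 hS8 le_rfl (by norm_num) (by norm_num)
    hW1eq hW1cont hWcont hWrep hGrep hqb hhb
  have hk1 : ∀ t ≥ S, |h t| ≤ 2 * HMpsi (-(1:ℝ)/4 - 3/2) t := by
    intro t ht
    have ht0 : (0:ℝ) < t := by linarith
    have := pass1 t ht
    rw [HMpsi_index_eq t (show -(1:ℝ)/4 - 0 - 3/2 = -(1:ℝ)/4 - 3/2 by ring)] at this
    nlinarith [HMpsi_pos (a := -(1:ℝ)/4 - 3/2) ht0]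
  have pass2 := HMpass q h W1 W S 2 (3/2) hS8 (by norm_num) (by norm_num) (by norm_num)
    hW1eq hW1cont hWcont hWrep hGrep hqb hk1
  have hk2 : ∀ t ≥ S, |h t| ≤ 2 * HMpsi (-(1:ℝ)/4 - 3) t := by
    intro t ht
    have ht0 : (0:ℝ) < t := by linarith
    have := pass2 t ht
    rw [HMpsi_index_eq t (show -(1:ℝ)/4 - 3/2 - 3/2 = -(1:ℝ)/4 - 3 by ring)] at this
    nlinarith [HMpsi_pos (a := -(1:ℝ)/4 - 3) ht0]
  have pass3 := HMpass q h W1 W S 2 3 hS8 (by norm_num) (by norm_num) (by norm_num)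
    hW1eq hW1cont hWcont hWrep hGrep hqb hk2
  refine ⟨S, hS8, fun s hs => ?_⟩
  have hs0 : (0:ℝ) < s := by linarith
  have := pass3 s hs
  rw [HMpsi_index_eq s (show -(1:ℝ)/4 - 3 - 3/2 = -(19:ℝ)/4 by ring)] at this
  have : |h s| ≤ 4 * HMpsi (-(19:ℝ)/4) s := by
    nlinarith [HMpsi_pos (a := -(19:ℝ)/4) hs0]
  exact this
-- appended: final assembly
lemma tendsto_HMA : Tendsto HMA atTop (𝓝 0) := by
  have t1 := tendsto_HMpsi (show -(3:ℝ)/4 ≤ 0 by norm_num)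
  have t2 := tendsto_HMpsi (show -(9:ℝ)/4 ≤ 0 by norm_num)
  have t3 := tendsto_HMpsi (show -(15:ℝ)/4 ≤ 0 by norm_num)
  have := ((t1.sub (t2.const_mul (41/48))).add (t3.const_mul (9241/4608))).const_mul HMc
  rw [show HMc * ((0:ℝ) - 41/48 * 0 + 9241/4608 * 0) = 0 by ring] at this
  exact this

/-- right-tail asymptotic expansion of `∫_s^∞ q`, for the Hastings–McLeod
solution of Painlevé II:
`∫_s^∞ q = e^{-(2/3)s^{3/2}}/(2√π s^{3/4}) · (1 - (41/48)s^{-3/2} + (9241/4608)s^{-3} + O(s^{-9/2}))`. -/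
theorem hastings_mcleod_tail_integral_expansion (q q' : ℝ → ℝ)
    (hq : ∀ s, HasDerivAt q (q' s) s)
    (hq' : ∀ s, HasDerivAt q' (2 * q s ^ 3 + s * q s) s)
    (hnorm : Tendsto (fun s : ℝ =>
        2 * Real.sqrt π * s ^ ((1 : ℝ) / 4) * Real.exp (2 / 3 * s ^ ((3 : ℝ) / 2)) * q s)
      atTop (nhds 1)) :
    ∃ C > 0, ∃ s₀ : ℝ, ∀ s ≥ s₀,
      |(∫ u in Set.Ioi s, q u) -
          Real.exp (-(2 / 3) * s ^ ((3 : ℝ) / 2)) / (2 * Real.sqrt π * s ^ ((3 : ℝ) / 4)) *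
            (1 - 41 / 48 * s ^ (-(3 : ℝ) / 2) + 9241 / 4608 * s ^ (-(3 : ℝ)))|
        ≤ C * Real.exp (-(2 / 3) * s ^ ((3 : ℝ) / 2)) * s ^ (-(3 : ℝ) / 4) *
            s ^ (-(9 : ℝ) / 2) := by
  obtain ⟨S, hS8, hkey⟩ := HMkey q q' hq hq' hnorm
  refine ⟨8, by norm_num, S, fun s hs => ?_⟩
  have hs0 : (0:ℝ) < s := by linarith
  -- basic integrability
  have hψint : IntegrableOn (HMpsi (-(19:ℝ)/4)) (Ioi s) volume :=
    integrableOn_HMpsi (by norm_num) hs0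
  have hmint : IntegrableOn HMm (Ioi s) volume := by
    have : IntegrableOn (fun u => HMc * (HMpsi (-(1:ℝ)/4) u - 5/48 * HMpsi (-(7:ℝ)/4) u
        + 385/4608 * HMpsi (-(13:ℝ)/4) u)) (Ioi s) volume :=
      (((integrableOn_HMpsi (by norm_num) hs0).sub
        ((integrableOn_HMpsi (by norm_num) hs0).const_mul _)).add
        ((integrableOn_HMpsi (by norm_num) hs0).const_mul _)).const_mul HMc
    exact this
  have hhint : IntegrableOn (fun u => q u - HMm u) (Ioi s) volume := by
    refine Integrable.mono' (hψint.const_mul 4) ?_ ?_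
    · refine (continuousOn_of_forall_continuousAt (fun x hx => ?_)).aestronglyMeasurable
        measurableSet_Ioi
      exact (hq x).continuousAt.sub (hasDerivAt_HMm (hs0.trans (mem_Ioi.1 hx))).continuousAt
    · filter_upwards [ae_restrict_mem measurableSet_Ioi] with u hu
      rw [Real.norm_eq_abs]
      exact hkey u (le_trans (le_trans hs (mem_Ioi.1 hu).le) le_rfl)
  -- split the integral of q
  have hsplit : ∫ u in Ioi s, q u = (∫ u in Ioi s, (q u - HMm u)) + ∫ u in Ioi s, HMm u := by
    rw [← integral_add hhint hmint]
    congr 1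
    funext u
    ring
  -- compute ∫ m via the antiderivative A
  have hψint19 : IntegrableOn (fun u => 46205/6144 * HMc * HMpsi (-(19:ℝ)/4) u)
      (Ioi s) volume := hψint.const_mul _
  have hAI : ∫ u in Ioi s, (HMm u + 46205/6144 * HMc * HMpsi (-(19:ℝ)/4) u) = HMA s := by
    have h0 := integral_Ioi_of_hasDerivAt_of_tendsto' (f := fun u => -HMA u)
      (f' := fun u => HMm u + 46205/6144 * HMc * HMpsi (-(19:ℝ)/4) u) (a := s) (m := 0)
      (fun x hx => by
        have hx0 : (0:ℝ) < x := lt_of_lt_of_le hs0 (mem_Ici.1 hx)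
        have := (hasDerivAt_HMA hx0).neg
        refine this.congr_deriv (Eq.symm ?_)
        ring)
      (hmint.add hψint19)
      (by simpa using tendsto_HMA.neg)
    rw [h0]; ring
  have hmI : ∫ u in Ioi s, HMm u
      = HMA s - 46205/6144 * HMc * ∫ u in Ioi s, HMpsi (-(19:ℝ)/4) u := by
    have h1 := integral_add hmint hψint19
    rw [hAI] at h1
    rw [integral_const_mul] at h1
    linarith
  -- bounds
  have hIψ_le : ∫ u in Ioi s, HMpsi (-(19:ℝ)/4) u
      ≤ s ^ (-(19:ℝ)/4 - 1/2) * Real.exp (-HMxi s) := integral_HMpsi_le (by norm_num) hs0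
  have hIψ_nonneg : (0:ℝ) ≤ ∫ u in Ioi s, HMpsi (-(19:ℝ)/4) u :=
    setIntegral_nonneg measurableSet_Ioi (fun u hu => (HMpsi_pos (hs0.trans (mem_Ioi.1 hu))).le)
  have habs_h : |∫ u in Ioi s, (q u - HMm u)| ≤ 4 * ∫ u in Ioi s, HMpsi (-(19:ℝ)/4) u := by
    rw [← Real.norm_eq_abs]
    refine le_trans (norm_integral_le_integral_norm _) ?_
    have step : ∫ u in Ioi s, ‖q u - HMm u‖ ≤ ∫ u in Ioi s, 4 * HMpsi (-(19:ℝ)/4) u := by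
      refine setIntegral_mono_on (hhint.norm) (hψint.const_mul 4) measurableSet_Ioi ?_
      intro u hu
      rw [Real.norm_eq_abs]
      exact hkey u (le_trans hs (mem_Ioi.1 hu).le)
    rw [integral_const_mul] at step
    exact step
  have hcoef : 46205/6144 * HMc ≤ 4 := by nlinarith [HMc_le_half, HMc_pos]
  have key1 : |(∫ u in Ioi s, q u) - HMA s|
      ≤ 8 * (s ^ (-(19:ℝ)/4 - 1/2) * Real.exp (-HMxi s)) := by
    rw [hsplit, hmI]
    have e : (∫ u in Ioi s, (q u - HMm u))
        + (HMA s - 46205/6144 * HMc * ∫ u in Ioi s, HMpsi (-(19:ℝ)/4) u) - HMA s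
        = (∫ u in Ioi s, (q u - HMm u))
          - 46205/6144 * HMc * ∫ u in Ioi s, HMpsi (-(19:ℝ)/4) u := by ring
    rw [e]
    refine le_trans (abs_sub _ _) ?_
    have h2 : |46205/6144 * HMc * ∫ u in Ioi s, HMpsi (-(19:ℝ)/4) u|
        ≤ 4 * ∫ u in Ioi s, HMpsi (-(19:ℝ)/4) u := by
      rw [abs_mul, abs_of_nonneg hIψ_nonneg,
        abs_of_nonneg (by nlinarith [HMc_pos] : (0:ℝ) ≤ 46205/6144 * HMc)]
      nlinarith
    nlinarith [habs_h, hIψ_le]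
  -- rewrite the target expression
  have eX : Real.exp (-(2/3) * s ^ ((3:ℝ)/2)) = Real.exp (-HMxi s) := by
    rw [HMxi]; congr 1; ring
  have hss : s ^ ((3:ℝ)/4) ≠ 0 := (Real.rpow_pos_of_pos hs0 _).ne'
  have hsqrt : (0:ℝ) < Real.sqrt π := Real.sqrt_pos.2 Real.pi_pos
  have p0 : (s ^ ((3:ℝ)/4))⁻¹ = s ^ (-(3:ℝ)/4) := by
    rw [← Real.rpow_neg hs0.le]
    congr 1; ring
  have p1 : s ^ (-(3:ℝ)/4) * s ^ (-(3:ℝ)/2) = s ^ (-(9:ℝ)/4) := by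
    rw [← Real.rpow_add hs0]; norm_num
  have p2 : s ^ (-(3:ℝ)/4) * s ^ (-(3:ℝ)) = s ^ (-(15:ℝ)/4) := by
    rw [← Real.rpow_add hs0]; norm_num
  have eA : Real.exp (-(2/3) * s ^ ((3:ℝ)/2)) / (2 * Real.sqrt π * s ^ ((3:ℝ)/4)) *
      (1 - 41/48 * s ^ (-(3:ℝ)/2) + 9241/4608 * s ^ (-(3:ℝ))) = HMA s := by
    have hC : (2 * Real.sqrt π)⁻¹ = HMc := by rw [HMc, one_div]
    rw [eX, HMA, HMpsi, HMpsi, HMpsi, div_eq_mul_inv, mul_inv, hC, p0]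
    linear_combination (-41/48 * HMc * Real.exp (-HMxi s)) * p1
      + (9241/4608 * HMc * Real.exp (-HMxi s)) * p2
  have eR : (8:ℝ) * Real.exp (-(2/3) * s ^ ((3:ℝ)/2)) * s ^ (-(3:ℝ)/4) * s ^ (-(9:ℝ)/2)
      = 8 * (s ^ (-(19:ℝ)/4 - 1/2) * Real.exp (-HMxi s)) := by
    rw [eX]
    rw [show s ^ (-(19:ℝ)/4 - 1/2) = s ^ (-(3:ℝ)/4) * s ^ (-(9:ℝ)/2) by
      rw [← Real.rpow_add hs0]; norm_num]
    ring
  rw [eA, eR]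
  exact key1
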